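/- Let p be an odd prime, P a finite noncyclic p-group with cyclic center, Z = Ω₁(Z(P)), and let N be a normal elementary abelian subgroup of P of order p². Then every maximal element S of the poset ℳ_Z(P) = {X ≤ P : Z < X = Ω₁(X), [X,X] ≤ Z} contains N. -/

import Mathlib

/-- A nontrivial normal subgroup of a finite `p`-group contains a nontrivial
central element. -/
lemma aux_normal_meets_center {p : ℕ} [Fact p.Prime] {P : Type*} [Group P] [Finite P]
    (hP : IsPGroup p P) {M : Subgroup P} (hM : M.Normal) (hbot : M ≠ ⊥) :
    ∃ x : P, x ∈ M ∧ x ≠ 1 ∧ x ∈ Subgroup.center P := by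
  classical
  haveI := hM
  have hPM : IsPGroup p M := hP.to_subgroup M
  have hMnt : Nontrivial M := by
    rw [← Subgroup.nontrivial_iff_ne_bot] at hbot
    exact hbot
  have hdvd : p ∣ Nat.card M := by
    obtain ⟨n, hn0, hn⟩ := hPM.nontrivial_iff_card.mp hMnt
    exact hn.symm ▸ dvd_pow_self _ (ne_of_gt hn0)
  have h1fix : (1 : M) ∈ MulAction.fixedPoints (ConjAct P) M := by
    intro g
    apply Subtype.ext
    rw [ConjAct.Subgroup.val_conj_smul]
    simp
  obtain ⟨b, hbfix, hbne⟩ :=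
    (hP.of_equiv ConjAct.toConjAct).exists_fixed_point_of_prime_dvd_card_of_fixed_point
      M hdvd h1fix
  refine ⟨(b : P), b.2, ?_, ?_⟩
  · intro h
    exact hbne (Subtype.ext h.symm)
  · rw [Subgroup.mem_center_iff]
    intro g
    have := hbfix (ConjAct.toConjAct g)
    have hval : g * (b : P) * g⁻¹ = (b : P) := by
      have := congrArg (Subtype.val) this
      rwa [ConjAct.Subgroup.val_conj_smul, ConjAct.toConjAct_smul] at this
    calc g * (b : P) = (g * (b : P) * g⁻¹) * g := by group
    _ = (b : P) * g := by rw [hval]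

open scoped commutatorElement in
/-- Let `p` be an odd prime, `P` a finite noncyclic `p`-group with cyclic center,
`Z = Ω₁(Z(P))`, and `N ⊴ P` elementary abelian of order `p²`. Then every maximal
element `S` of `ℳ_Z(P) = {X ≤ P : Z < X = Ω₁(X), [X,X] ≤ Z}` contains `N`. -/
theorem stmt_10 {p : ℕ} (hp : p.Prime) (hodd : Odd p)
    {P : Type*} [Group P] [Finite P] (hP : IsPGroup p P) (hnc : ¬ IsCyclic P)
    (hcyc : IsCyclic (Subgroup.center P))
    (Z : Subgroup P)
    (hZ : Z = Subgroup.closure {x : P | x ∈ Subgroup.center P ∧ x ^ p = 1})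
    (N : Subgroup P) (hN : N.Normal) (hNcard : Nat.card N = p ^ 2)
    (hNexp : ∀ x ∈ N, x ^ p = 1) (hNab : ∀ a ∈ N, ∀ b ∈ N, a * b = b * a)
    (S : Subgroup P)
    (hS₁ : Z < S) (hS₂ : S = Subgroup.closure {x : P | x ∈ S ∧ x ^ p = 1})
    (hS₃ : ⁅S, S⁆ ≤ Z)
    (hSmax : ∀ T : Subgroup P, Z < T →
      T = Subgroup.closure {x : P | x ∈ T ∧ x ^ p = 1} →
      ⁅T, T⁆ ≤ Z → S ≤ T → T = S) :
    N ≤ S := by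
  classical
  haveI : Fact p.Prime := ⟨hp⟩
  haveI := hN
  -- `C = [N, P]` is a proper subgroup of `N`
  set C : Subgroup P := ⁅N, (⊤ : Subgroup P)⁆ with hCdef
  have hCN : C ≤ N := Subgroup.commutator_le_left N ⊤
  have hNbot : N ≠ ⊥ := by
    intro h
    rw [h, Subgroup.card_bot] at hNcard
    nlinarith [hp.one_lt]
  have hCne : C ≠ N := by
    intro hEq
    haveI : Group.IsNilpotent P := hP.isNilpotent
    obtain ⟨n, hn⟩ := nilpotent_iff_lowerCentralSeries.mp this
    have key : ∀ k : ℕ, N ≤ Subgroup.lowerCentralSeries (⊤ : Subgroup P) k := by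
      intro k
      induction k with
      | zero => exact le_top
      | succ k ih =>
        have : Subgroup.lowerCentralSeries (⊤ : Subgroup P) (k+1) = ⁅Subgroup.lowerCentralSeries (⊤ : Subgroup P) k, ⊤⁆ := rfl
        rw [this]
        calc N = C := hEq.symm
        _ ≤ ⁅Subgroup.lowerCentralSeries (⊤ : Subgroup P) k, ⊤⁆ := Subgroup.commutator_mono ih le_rfl
    have := key n
    rw [hn, le_bot_iff] at this
    exact hNbot this
  -- hence `C` has order dividing `p`, and `C ≤ Z`
  have hCcard : Nat.card C ∣ p ^ 2 := hNcard ▸ Subgroup.card_dvd_of_le hCN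
  have hCltN : Nat.card C ≠ p ^ 2 := by
    intro h
    exact hCne (Subgroup.eq_of_le_of_card_ge hCN (le_of_eq (hNcard.trans h.symm)))
  have hCcases : Nat.card C = 1 ∨ Nat.card C = p := by
    obtain ⟨i, hi, hival⟩ := (Nat.dvd_prime_pow hp).mp hCcard
    interval_cases i
    · left; simpa using hival
    · right; simpa using hival
    · exact absurd (by simpa using hival) hCltN
  have hZle : Z ≤ Subgroup.center P := by
    rw [hZ, Subgroup.closure_le]
    intro x hx
    exact hx.1
  have hCZ : C ≤ Z := by
    rcases hCcases with h1 | hpcard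
    · have : C = ⊥ := Subgroup.eq_bot_of_card_eq C h1
      rw [this]; exact bot_le
    · -- `C` is normal of order `p`, hence central of exponent `p`
      have hCbot : C ≠ ⊥ := by
        intro h
        rw [h] at hpcard
        simp [Nat.card_eq_one_iff_unique] at hpcard
        exact hp.one_lt.ne (by omega)
      haveI : C.Normal := Subgroup.commutator_normal N ⊤
      obtain ⟨x, hxC, hxne, hxc⟩ := aux_normal_meets_center hP this hCbot
      -- D = C ⊓ center has order p = |C| so C ≤ center
      set D := C ⊓ Subgroup.center P with hD
      have hDC : D ≤ C := inf_le_left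
      have hDcard : Nat.card D ∣ p := hpcard ▸ Subgroup.card_dvd_of_le hDC
      have hDne : Nat.card D ≠ 1 := by
        intro h
        have : D = ⊥ := Subgroup.eq_bot_of_card_eq D h
        have hxD : x ∈ D := ⟨hxC, hxc⟩
        rw [this, Subgroup.mem_bot] at hxD
        exact hxne hxD
      have hDp : Nat.card D = p := ((Nat.dvd_prime hp).mp hDcard).resolve_left hDne
      have hDCeq : D = C := Subgroup.eq_of_le_of_card_ge hDC (le_of_eq (hDp.symm ▸ hpcard.symm ▸ rfl))
      have hCcen : C ≤ Subgroup.center P := hDCeq ▸ inf_le_right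
      intro y hy
      have hyp : y ^ p = 1 := by
        have h1 : (⟨y, hy⟩ : C) ^ (Nat.card C) = 1 := pow_card_eq_one'
        rw [hpcard] at h1
        have := congrArg (Subtype.val) h1
        simpa using this
      rw [hZ]
      exact Subgroup.subset_closure ⟨hCcen hy, hyp⟩
  -- Now consider T = N ⊔ S ∈ ℳ_Z(P)
  set T := N ⊔ S with hT
  have hZnormal : Z.Normal := by
    constructor
    intro n hn g
    have : n * g = g * n := ((Subgroup.mem_center_iff.mp (hZle hn)) g).symm
    have : g * n * g⁻¹ = n := by rw [← this]; group
    rw [this];  exact hn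
  have hT1 : Z < T := lt_of_lt_of_le hS₁ le_sup_right
  -- commutator condition via the quotient P/Z
  have hT3 : ⁅T, T⁆ ≤ Z := by
    rw [Subgroup.commutator_le]
    intro a ha b hb
    have hmem : ∀ c ∈ T, ∃ n ∈ N, ∃ s ∈ S, c = n * s := by
      intro c hc
      have : c ∈ (↑(N ⊔ S) : Set P) := hc
      rw [Subgroup.normal_mul] at this
      obtain ⟨n, hn, s, hs, rfl⟩ := this
      exact ⟨n, hn, s, hs, rfl⟩
    obtain ⟨n₁, hn₁, s₁, hs₁, rfl⟩ := hmem a ha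
    obtain ⟨n₂, hn₂, s₂, hs₂, rfl⟩ := hmem b hb
    set π := QuotientGroup.mk' Z with hπ
    have hker : ∀ z : P, z ∈ Z → π z = 1 := by
      intro z hz
      rwa [← QuotientGroup.ker_mk' Z, MonoidHom.mem_ker] at hz
    have cNN : Commute (π n₁) (π n₂) := by
      have : n₁ * n₂ = n₂ * n₁ := hNab n₁ hn₁ n₂ hn₂
      unfold Commute SemiconjBy
      rw [← map_mul, ← map_mul, this]
    have cNS : ∀ n ∈ N, ∀ s : P, Commute (π n) (π s) := by
      intro n hn s
      have : ⁅n, s⁆ ∈ Z := hCZ (Subgroup.commutator_mem_commutator hn (Subgroup.mem_top s))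
      have h1 : π ⁅n, s⁆ = 1 := hker _ this
      rw [map_commutatorElement] at h1
      exact commutatorElement_eq_one_iff_commute.mp h1
    have cSS : Commute (π s₁) (π s₂) := by
      have : ⁅s₁, s₂⁆ ∈ Z := hS₃ (Subgroup.commutator_mem_commutator hs₁ hs₂)
      have h1 : π ⁅s₁, s₂⁆ = 1 := hker _ this
      rw [map_commutatorElement] at h1
      exact commutatorElement_eq_one_iff_commute.mp h1
    have hcomm : Commute (π (n₁ * s₁)) (π (n₂ * s₂)) := by
      rw [map_mul, map_mul]
      exact Commute.mul_left (cNN.mul_right (cNS n₁ hn₁ s₂))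
        ((cNS n₂ hn₂ s₁).symm.mul_right cSS)
    have : π ⁅n₁ * s₁, n₂ * s₂⁆ = 1 := by
      rw [map_commutatorElement]
      exact commutatorElement_eq_one_iff_commute.mpr hcomm
    rwa [← MonoidHom.mem_ker, QuotientGroup.ker_mk'] at this
  -- Omega condition
  have hT2 : T = Subgroup.closure {x : P | x ∈ T ∧ x ^ p = 1} := by
    apply le_antisymm
    · apply sup_le
      · intro n hn
        exact Subgroup.subset_closure ⟨Subgroup.mem_sup_left hn, hNexp n hn⟩
      · calc S = Subgroup.closure {x : P | x ∈ S ∧ x ^ p = 1} := hS₂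
        _ ≤ Subgroup.closure {x : P | x ∈ T ∧ x ^ p = 1} := by
            apply Subgroup.closure_mono
            intro x hx
            exact ⟨Subgroup.mem_sup_right hx.1, hx.2⟩
    · rw [Subgroup.closure_le]
      intro x hx
      exact hx.1
  have := hSmax T hT1 hT2 hT3 le_sup_right
  rw [← this]
  exact le_sup_left
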